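/- arXiv:0705.3774 — 2 statements merged into one kernel-verified Lean document; each statement's English description precedes it below -/
import Mathlib

section
/- Let n ≥ 3 be an integer, m = n − 1, and 0 < r₀ < r₁. Let f be a smooth function on 𝕋^m × [r₀, r₁) and let u be a smooth positive function on 𝕋^m × [r₀, r₁) satisfying (n−1) r ∂u/∂r = u²Δu + ((n−1)(n−2)/2) u + f u³. Define ũ(p, t) = r^{1 − n/2} u(p, r) and f̃(p, t) = f(p, r), where t = r^{n−2}/((n−1)(n−2)). Then ũ is a smooth positive function satisfying ∂ũ/∂t = ũ²Δũ + f̃ ũ³ on 𝕋^m × [t₀, t₁), where t_i = r_i^{n−2}/((n−1)(n−2)). -/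
open MeasureTheory Filter Set

/-- Partial derivative in the `i`-th coordinate direction of a function on `ℝ^m`. -/
noncomputable def pd {m : ℕ} (i : Fin m) (φ : (Fin m → ℝ) → ℝ) : (Fin m → ℝ) → ℝ :=
  fun p => deriv (fun x : ℝ => φ (Function.update p i x)) (p i)

/-- The flat Laplacian: sum of second partial derivatives in the standard coordinates. -/
noncomputable def flatLap {m : ℕ} (φ : (Fin m → ℝ) → ℝ) : (Fin m → ℝ) → ℝ :=
  fun p => ∑ i, pd i (pd i φ) p

/-- The squared norm of the gradient in the standard flat coordinates. -/
noncomputable def gradSq {m : ℕ} (φ : (Fin m → ℝ) → ℝ) : (Fin m → ℝ) → ℝ :=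
  fun p => ∑ i, (pd i φ p) ^ 2

/-- `φ : ℝ^m → ℝ` is ℤ^m-periodic, i.e. descends to the flat torus `𝕋^m = (ℝ/ℤ)^m`. -/
def ZPer {m : ℕ} (φ : (Fin m → ℝ) → ℝ) : Prop :=
  ∀ (p : Fin m → ℝ) (z : Fin m → ℤ), φ (fun i => p i + (z i : ℝ)) = φ p

/-- A fundamental domain for the torus `(ℝ/ℤ)^m`; its Lebesgue volume is 1, so integrals
over it realize the normalized Haar integral over `𝕋^m`. -/
def cube (m : ℕ) : Set (Fin m → ℝ) := Set.univ.pi fun _ => Set.Ico (0 : ℝ) 1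

/-- Iterated partial derivative along a list of coordinate directions. -/
noncomputable def pdList {m : ℕ} (l : List (Fin m)) (φ : (Fin m → ℝ) → ℝ) : (Fin m → ℝ) → ℝ :=
  List.foldr pd φ l

/-- The Euclidean ball of radius `r` about `p`; for `r < 1/2` this is isometric to the
metric ball of radius `r` in the flat torus `𝕋^m`. -/
def eBall {m : ℕ} (p : Fin m → ℝ) (r : ℝ) : Set (Fin m → ℝ) := {q | ∑ i, (q i - p i) ^ 2 < r ^ 2}

lemma pd_const_mul {m : ℕ} (i : Fin m) (a : ℝ) (φ : (Fin m → ℝ) → ℝ) :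
    pd i (fun q => a * φ q) = fun p => a * pd i φ p := by
  funext p
  simp only [pd]
  exact deriv_const_mul_field a

lemma flatLap_const_mul {m : ℕ} (a : ℝ) (φ : (Fin m → ℝ) → ℝ) (p : Fin m → ℝ) :
    flatLap (fun q => a * φ q) p = a * flatLap φ p := by
  simp only [flatLap, pd_const_mul, Finset.mul_sum]

theorem stmt_3 (n : ℕ) (hn : 3 ≤ n) (r₀ r₁ : ℝ) (hr₀ : 0 < r₀) (hr₀₁ : r₀ < r₁)
    (f u : (Fin (n - 1) → ℝ) → ℝ → ℝ)
    (hfsmooth : ContDiffOn ℝ (⊤ : ℕ∞) (fun q : (Fin (n - 1) → ℝ) × ℝ => f q.1 q.2)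
      (Set.univ ×ˢ Set.Ico r₀ r₁))
    (hfper : ∀ r ∈ Set.Ico r₀ r₁, ZPer (fun p => f p r))
    (husmooth : ContDiffOn ℝ (⊤ : ℕ∞) (fun q : (Fin (n - 1) → ℝ) × ℝ => u q.1 q.2)
      (Set.univ ×ˢ Set.Ico r₀ r₁))
    (huper : ∀ r ∈ Set.Ico r₀ r₁, ZPer (fun p => u p r))
    (hupos : ∀ p, ∀ r ∈ Set.Ico r₀ r₁, 0 < u p r)
    (hpde : ∀ p, ∀ r ∈ Set.Ico r₀ r₁,
      ((n : ℝ) - 1) * r * derivWithin (fun s => u p s) (Set.Ico r₀ r₁) r =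
        (u p r) ^ 2 * flatLap (fun q => u q r) p
          + ((n : ℝ) - 1) * ((n : ℝ) - 2) / 2 * u p r + f p r * (u p r) ^ 3)
    (rOf : ℝ → ℝ)
    (hrOf : ∀ t : ℝ, rOf t = (((n : ℝ) - 1) * ((n : ℝ) - 2) * t) ^ ((1 : ℝ) / ((n : ℝ) - 2)))
    (t₀ t₁ : ℝ)
    (ht₀ : t₀ = r₀ ^ (n - 2) / (((n : ℝ) - 1) * ((n : ℝ) - 2)))
    (ht₁ : t₁ = r₁ ^ (n - 2) / (((n : ℝ) - 1) * ((n : ℝ) - 2)))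
    (ut ft : (Fin (n - 1) → ℝ) → ℝ → ℝ)
    (hut : ∀ p t, ut p t = (rOf t) ^ ((1 : ℝ) - (n : ℝ) / 2) * u p (rOf t))
    (hft : ∀ p t, ft p t = f p (rOf t)) :
    ContDiffOn ℝ (⊤ : ℕ∞) (fun q : (Fin (n - 1) → ℝ) × ℝ => ut q.1 q.2)
      (Set.univ ×ˢ Set.Ico t₀ t₁) ∧
    (∀ t ∈ Set.Ico t₀ t₁, ZPer (fun p => ut p t)) ∧
    (∀ p, ∀ t ∈ Set.Ico t₀ t₁, 0 < ut p t) ∧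
    (∀ p, ∀ t ∈ Set.Ico t₀ t₁,
      derivWithin (fun s => ut p s) (Set.Ico t₀ t₁) t =
        (ut p t) ^ 2 * flatLap (fun q => ut q t) p + ft p t * (ut p t) ^ 3) := by
  -- basic numerology
  set N : ℝ := (n : ℝ) with hNdef
  have hN : (3 : ℝ) ≤ N := by rw [hNdef]; exact_mod_cast hn
  have hN2 : (0 : ℝ) < N - 2 := by linarith
  set c : ℝ := (N - 1) * (N - 2) with hcdef
  have hc : 0 < c := by
    have : (0:ℝ) < N - 1 := by linarith
    positivity
  set e : ℝ := 1 / (N - 2) with hedef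
  have he : 0 < e := by positivity
  have hcast : ((n - 2 : ℕ) : ℝ) = N - 2 := by
    have h2 : (2:ℕ) ≤ n := by omega
    push_cast [Nat.cast_sub h2]
    ring
  -- rOf functional form
  have hrOfEq : ∀ t, rOf t = (c * t) ^ e := fun t => hrOf t
  -- inverse relation
  have hinv : ∀ r : ℝ, 0 < r → ((r ^ (n - 2) : ℝ)) ^ e = r := by
    intro r hr
    rw [← Real.rpow_natCast r (n - 2), ← Real.rpow_mul hr.le, hcast]
    rw [show (N - 2) * e = 1 by rw [hedef]; field_simp, Real.rpow_one]
  have hct₀ : c * t₀ = r₀ ^ (n - 2) := by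
    rw [ht₀]; field_simp
  have hct₁ : c * t₁ = r₁ ^ (n - 2) := by
    rw [ht₁]; field_simp
  have hct₀pos : 0 < c * t₀ := by rw [hct₀]; positivity
  have ht₀pos : 0 < t₀ := by
    by_contra h
    push_neg at h
    nlinarith
  have hctpos : ∀ t ∈ Set.Ico t₀ t₁, 0 < c * t := by
    intro t ht
    have := ht.1
    nlinarith
  -- rOf maps into [r₀, r₁)
  have hMaps : Set.MapsTo rOf (Set.Ico t₀ t₁) (Set.Ico r₀ r₁) := by
    intro t ht
    rw [Set.mem_Ico]
    constructor
    · have h1 : (c * t₀) ^ e ≤ (c * t) ^ e :=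
        Real.rpow_le_rpow hct₀pos.le (by nlinarith [ht.1]) he.le
      rw [hct₀, hinv r₀ hr₀] at h1
      rw [hrOfEq]; exact h1
    · have h1 : (c * t) ^ e < (c * t₁) ^ e :=
        Real.rpow_lt_rpow (hctpos t ht).le (by nlinarith [ht.2]) he
      rw [hct₁, hinv r₁ (lt_trans hr₀ hr₀₁)] at h1
      rw [hrOfEq]; exact h1
  have hrOfpos : ∀ t ∈ Set.Ico t₀ t₁, 0 < rOf t := fun t ht => lt_of_lt_of_le hr₀ (hMaps ht).1
  -- smoothness of rOf on Ico t₀ t₁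
  have hrOfC : ContDiffOn ℝ (⊤ : ℕ∞) rOf (Set.Ico t₀ t₁) := by
    intro t ht
    apply ContDiffAt.contDiffWithinAt
    have h1 : ContDiffAt ℝ (⊤ : ℕ∞) (fun x : ℝ => x ^ e) (c * t) :=
      Real.contDiffAt_rpow_const_of_ne (ne_of_gt (hctpos t ht))
    have h2 : ContDiffAt ℝ (⊤ : ℕ∞) (fun s : ℝ => c * s) t :=
      contDiffAt_const.mul contDiffAt_id
    have := h1.comp t h2
    convert this using 1
    funext s
    exact hrOfEq s
  -- derivative of rOf
  have hrOfDeriv : ∀ t ∈ Set.Ico t₀ t₁,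
      HasDerivAt rOf ((N - 1) * (rOf t) ^ ((3:ℝ) - N)) t := by
    intro t ht
    have hctp := hctpos t ht
    have h1 : HasDerivAt (fun x : ℝ => x ^ e) (e * (c * t) ^ (e - 1)) (c * t) :=
      Real.hasDerivAt_rpow_const (Or.inl (ne_of_gt hctp))
    have h2 : HasDerivAt (fun s : ℝ => c * s) c t := by
      simpa using (hasDerivAt_id t).const_mul c
    have h3 := h1.comp t h2
    have h4 : (fun s : ℝ => (c * s) ^ e) = rOf := by
      funext s; exact (hrOfEq s).symm
    have h5 : e * (c * t) ^ (e - 1) * c = (N - 1) * (rOf t) ^ ((3:ℝ) - N) := by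
      rw [hrOfEq, ← Real.rpow_mul hctp.le]
      rw [show e * ((3:ℝ) - N) = e - 1 by rw [hedef]; field_simp; ring]
      rw [hcdef, hedef]
      field_simp
    have h6 : HasDerivAt rOf (e * (c * t) ^ (e - 1) * c) t := by
      rw [← h4]; exact h3
    rw [h5] at h6
    exact h6
  -- slice smoothness of u
  have hslice : ∀ p, ContDiffOn ℝ (⊤ : ℕ∞) (fun s => u p s) (Set.Ico r₀ r₁) := by
    intro p
    have hpair : ContDiff ℝ (⊤ : ℕ∞) (fun s : ℝ => ((p, s) : (Fin (n - 1) → ℝ) × ℝ)) :=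
      contDiff_const.prodMk contDiff_id
    exact husmooth.comp hpair.contDiffOn (fun s hs => ⟨Set.mem_univ _, hs⟩)
  refine ⟨?_, ?_, ?_, ?_⟩
  · -- smoothness
    have heq : (fun q : (Fin (n - 1) → ℝ) × ℝ => ut q.1 q.2)
        = fun q => (rOf q.2) ^ ((1:ℝ) - N / 2) * u q.1 (rOf q.2) := by
      funext q; exact hut q.1 q.2
    rw [heq]
    have hfac1 : ContDiffOn ℝ (⊤ : ℕ∞) (fun q : (Fin (n - 1) → ℝ) × ℝ =>
        (rOf q.2) ^ ((1:ℝ) - N / 2)) (Set.univ ×ˢ Set.Ico t₀ t₁) := by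
      intro q hq
      have hq2 : q.2 ∈ Set.Ico t₀ t₁ := hq.2
      have h1 : ContDiffWithinAt ℝ (⊤ : ℕ∞) rOf (Set.Ico t₀ t₁) q.2 := hrOfC _ hq2
      have h2 : ContDiffAt ℝ (⊤ : ℕ∞) (fun x : ℝ => x ^ ((1:ℝ) - N / 2)) (rOf q.2) :=
        Real.contDiffAt_rpow_const_of_ne (ne_of_gt (hrOfpos _ hq2))
      have h3 : ContDiffWithinAt ℝ (⊤ : ℕ∞) (fun s => (rOf s) ^ ((1:ℝ) - N / 2))
          (Set.Ico t₀ t₁) q.2 := h2.comp_contDiffWithinAt q.2 h1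
      exact h3.comp q contDiff_snd.contDiffWithinAt (fun x hx => hx.2)
    have hfac2 : ContDiffOn ℝ (⊤ : ℕ∞) (fun q : (Fin (n - 1) → ℝ) × ℝ =>
        u q.1 (rOf q.2)) (Set.univ ×ˢ Set.Ico t₀ t₁) := by
      have hG : ContDiffOn ℝ (⊤ : ℕ∞) (fun q : (Fin (n - 1) → ℝ) × ℝ => (q.1, rOf q.2))
          (Set.univ ×ˢ Set.Ico t₀ t₁) :=
        contDiff_fst.contDiffOn.prodMk
          (hrOfC.comp contDiff_snd.contDiffOn (fun q hq => hq.2))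
      exact husmooth.comp hG (fun q hq => ⟨Set.mem_univ _, hMaps hq.2⟩)
    exact hfac1.mul hfac2
  · -- periodicity
    intro t ht p z
    simp only [hut]
    congr 1
    exact huper (rOf t) (hMaps ht) p z
  · -- positivity
    intro p t ht
    rw [hut]
    have h1 : 0 < (rOf t) ^ ((1:ℝ) - N / 2) := Real.rpow_pos_of_pos (hrOfpos t ht) _
    exact mul_pos h1 (hupos p _ (hMaps ht))
  · -- the PDE
    intro p t ht
    set r : ℝ := rOf t with hrdef
    have hrmem : r ∈ Set.Ico r₀ r₁ := hMaps ht
    have hrpos : 0 < r := hrOfpos t ht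
    set ur : ℝ := derivWithin (fun s => u p s) (Set.Ico r₀ r₁) r with hurdef
    have hdu : HasDerivWithinAt (fun s => u p s) ur (Set.Ico r₀ r₁) r :=
      (((hslice p).differentiableOn (by simp)) r hrmem).hasDerivWithinAt
    have hdrOf : HasDerivAt rOf ((N - 1) * r ^ ((3:ℝ) - N)) t := hrOfDeriv t ht
    have hcomp1 : HasDerivWithinAt (fun s => u p (rOf s))
        (ur * ((N - 1) * r ^ ((3:ℝ) - N))) (Set.Ico t₀ t₁) t :=
      HasDerivWithinAt.comp t hdu (hdrOf.hasDerivWithinAt) hMaps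
    have hpow : HasDerivWithinAt (fun s => (rOf s) ^ ((1:ℝ) - N / 2))
        ((((1:ℝ) - N / 2) * r ^ ((1:ℝ) - N / 2 - 1)) * ((N - 1) * r ^ ((3:ℝ) - N)))
        (Set.Ico t₀ t₁) t :=
      ((Real.hasDerivAt_rpow_const (p := (1:ℝ) - N / 2)
        (Or.inl (ne_of_gt hrpos))).comp t hdrOf).hasDerivWithinAt
    have hprod : HasDerivWithinAt (fun s => (rOf s) ^ ((1:ℝ) - N / 2) * u p (rOf s))
        (((((1:ℝ) - N / 2) * r ^ ((1:ℝ) - N / 2 - 1)) * ((N - 1) * r ^ ((3:ℝ) - N)))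
            * u p r
          + r ^ ((1:ℝ) - N / 2) * (ur * ((N - 1) * r ^ ((3:ℝ) - N))))
        (Set.Ico t₀ t₁) t := hpow.mul hcomp1
    have hfun : (fun s => ut p s) = fun s => (rOf s) ^ ((1:ℝ) - N / 2) * u p (rOf s) := by
      funext s; exact hut p s
    have hDW : derivWithin (fun s => ut p s) (Set.Ico t₀ t₁) t
        = ((((1:ℝ) - N / 2) * r ^ ((1:ℝ) - N / 2 - 1)) * ((N - 1) * r ^ ((3:ℝ) - N)))
            * u p r
          + r ^ ((1:ℝ) - N / 2) * (ur * ((N - 1) * r ^ ((3:ℝ) - N))) := by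
      rw [hfun]
      exact hprod.derivWithin (uniqueDiffOn_Ico t₀ t₁ t ht)
    -- rewrite flatLap of ut
    have hlapfun : (fun q => ut q t) = fun q => r ^ ((1:ℝ) - N / 2) * u q r := by
      funext q; exact hut q t
    have hlap : flatLap (fun q => ut q t) p
        = r ^ ((1:ℝ) - N / 2) * flatLap (fun q => u q r) p := by
      rw [hlapfun]; exact flatLap_const_mul _ _ _
    rw [hDW, hlap, hut p t, hft p t, ← hrdef]
    set L : ℝ := flatLap (fun q => u q r) p with hLdef
    have hpde' : (N - 1) * r * ur = (u p r) ^ 2 * L + (N - 1) * (N - 2) / 2 * u p r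
        + f p r * (u p r) ^ 3 := hpde p r hrmem
    -- power identities
    set S : ℝ := r ^ (-(N / 2)) with hSdef
    have hA : r ^ ((1:ℝ) - N / 2) = r * S := by
      rw [hSdef, show (1:ℝ) - N / 2 = 1 + -(N / 2) by ring, Real.rpow_add hrpos,
        Real.rpow_one]
    have hA' : r ^ ((1:ℝ) - N / 2 - 1) = S := by
      rw [hSdef, show (1:ℝ) - N / 2 - 1 = -(N / 2) by ring]
    have hB : r ^ ((3:ℝ) - N) = r * r * r * (S * S) := by
      rw [hSdef, show (3:ℝ) - N = 1 + 1 + 1 + (-(N / 2) + -(N / 2)) by ring]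
      rw [Real.rpow_add hrpos, Real.rpow_add hrpos, Real.rpow_add hrpos,
        Real.rpow_add hrpos, Real.rpow_one]
    rw [hA, hA', hB]
    linear_combination (r * S) ^ 3 * hpde'
end

section
/- Let m ≥ 1, τ₀ ∈ ℝ, and let f be a smooth function on 𝕋^m × [τ₀, ∞) with ∂f/∂τ ≥ 0. Let v be a smooth positive solution on 𝕋^m × [τ₀, ∞) of ∂v/∂τ = v²Δv + f v³ − v/2, and define J(τ) = ∫_{𝕋^m} ( |∇v(·, τ)|² − f(·, τ) v(·, τ)² + log v(·, τ) ) dV. Then J is differentiable on [τ₀, ∞) and J′(τ) ≤ −2 ∫_{𝕋^m} v(·, τ)^{−2} |∂v/∂τ(·, τ)|² dV ≤ 0 for every τ; in particular J is non-increasing. -/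
open MeasureTheory Filter Set

/-! ### Auxiliary lemmas -/

theorem cube_subset_Icc {m : ℕ} : cube m ⊆ Set.Icc (0 : Fin m → ℝ) 1 := by
  rw [← Set.pi_univ_Icc]
  exact Set.pi_mono fun i _ => Set.Ico_subset_Icc_self

theorem measurableSet_cube {m : ℕ} : MeasurableSet (cube m) :=
  MeasurableSet.univ_pi fun _ => measurableSet_Ico

theorem volume_cube {m : ℕ} : volume (cube m) = 1 := by
  rw [cube, volume_pi_pi]
  simp [Real.volume_Ico]

theorem cube_ae_Icc {m : ℕ} : cube m =ᵐ[volume] Set.Icc (0 : Fin m → ℝ) 1 := by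
  rw [MeasureTheory.volume_pi]
  have := MeasureTheory.Measure.univ_pi_Ico_ae_eq_Icc
    (μ := fun _ : Fin m => (volume : Measure ℝ)) (f := fun _ => (0:ℝ)) (g := fun _ => (1:ℝ))
  exact this

theorem uniqueDiffOn_S {m : ℕ} (τ₀ : ℝ) :
    UniqueDiffOn ℝ ((Set.univ : Set (Fin m → ℝ)) ×ˢ Set.Ici τ₀) :=
  uniqueDiffOn_univ.prod (uniqueDiffOn_Ici τ₀)

theorem closure_interior_S {m : ℕ} (τ₀ : ℝ) :
    closure (interior ((Set.univ : Set (Fin m → ℝ)) ×ˢ Set.Ici τ₀)) =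
      (Set.univ : Set (Fin m → ℝ)) ×ˢ Set.Ici τ₀ := by
  rw [interior_prod_eq, interior_univ, interior_Ici, closure_prod_eq, closure_univ, closure_Ioi]

theorem integrableOn_cube {m : ℕ} {g : (Fin m → ℝ) → ℝ} (hg : Continuous g) :
    IntegrableOn g (cube m) volume :=
  (hg.continuousOn.integrableOn_compact isCompact_Icc).mono_set cube_subset_Icc

theorem hasDerivAt_coordPath {m : ℕ} {τ₀ : ℝ} {F : Type*} [NormedAddCommGroup F]
    [NormedSpace ℝ F] {Φ : ((Fin m → ℝ) × ℝ) → F} {p : Fin m → ℝ} {τ : ℝ}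
    (hτ : τ ∈ Set.Ici τ₀)
    (hΦ : DifferentiableWithinAt ℝ Φ ((Set.univ : Set (Fin m → ℝ)) ×ˢ Set.Ici τ₀) (p, τ))
    (i : Fin m) :
    HasDerivAt (fun x => Φ (Function.update p i x, τ))
      (fderivWithin ℝ Φ ((Set.univ : Set (Fin m → ℝ)) ×ˢ Set.Ici τ₀) (p, τ)
        ((Pi.single i 1 : Fin m → ℝ), (0:ℝ))) (p i) := by
  have hg : HasDerivAt (fun x : ℝ => (Function.update p i x, τ))
      (((Pi.single i 1 : Fin m → ℝ), (0:ℝ))) (p i) :=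
    (hasDerivAt_update p i (p i)).prodMk (hasDerivAt_const _ _)
  have h := hΦ.hasFDerivWithinAt.comp_hasDerivWithinAt_of_eq (p i)
    (hg.hasDerivWithinAt (s := Set.univ))
    (fun x _ => ⟨Set.mem_univ _, hτ⟩)
    (by rw [Function.update_eq_self])
  rw [hasDerivWithinAt_univ] at h
  exact h

theorem hasDerivWithinAt_timePath {m : ℕ} {τ₀ : ℝ} {F : Type*} [NormedAddCommGroup F]
    [NormedSpace ℝ F] {Φ : ((Fin m → ℝ) × ℝ) → F} {p : Fin m → ℝ} {τ : ℝ}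
    (hΦ : DifferentiableWithinAt ℝ Φ ((Set.univ : Set (Fin m → ℝ)) ×ˢ Set.Ici τ₀) (p, τ)) :
    HasDerivWithinAt (fun s => Φ (p, s))
      (fderivWithin ℝ Φ ((Set.univ : Set (Fin m → ℝ)) ×ˢ Set.Ici τ₀) (p, τ)
        ((0 : Fin m → ℝ), (1:ℝ))) (Set.Ici τ₀) τ := by
  have hg : HasDerivAt (fun s : ℝ => ((p : Fin m → ℝ), s)) (((0 : Fin m → ℝ), (1:ℝ))) τ :=
    (hasDerivAt_const _ _).prodMk (hasDerivAt_id _)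
  exact hΦ.hasFDerivWithinAt.comp_hasDerivWithinAt τ (hg.hasDerivWithinAt)
    (fun s hs => ⟨Set.mem_univ _, hs⟩)

theorem hasFDerivAt_slice {m : ℕ} {τ₀ : ℝ} {F : Type*} [NormedAddCommGroup F]
    [NormedSpace ℝ F] {Φ : ((Fin m → ℝ) × ℝ) → F} {q : Fin m → ℝ} {τ : ℝ}
    (hτ : τ ∈ Set.Ici τ₀)
    (hΦ : DifferentiableWithinAt ℝ Φ ((Set.univ : Set (Fin m → ℝ)) ×ˢ Set.Ici τ₀) (q, τ)) :
    HasFDerivAt (fun x => Φ (x, τ))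
      ((fderivWithin ℝ Φ ((Set.univ : Set (Fin m → ℝ)) ×ˢ Set.Ici τ₀) (q, τ)).comp
        (ContinuousLinearMap.inl ℝ (Fin m → ℝ) ℝ)) q := by
  have hg : HasFDerivAt (fun x : Fin m → ℝ => (x, τ))
      (ContinuousLinearMap.inl ℝ (Fin m → ℝ) ℝ) q :=
    (hasFDerivAt_id q).prodMk (hasFDerivAt_const τ q)
  have h := hΦ.hasFDerivWithinAt.comp (t := (Set.univ : Set (Fin m → ℝ)) ×ˢ Set.Ici τ₀)
    (s := (Set.univ : Set (Fin m → ℝ))) q (hg.hasFDerivWithinAt)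
    (fun x _ => ⟨Set.mem_univ _, hτ⟩)
  rw [hasFDerivWithinAt_univ] at h
  exact h

theorem pd_of_hasFDerivAt {m : ℕ} {φ : (Fin m → ℝ) → ℝ} {φ' : (Fin m → ℝ) →L[ℝ] ℝ}
    {q : Fin m → ℝ} (h : HasFDerivAt φ φ' q) (i : Fin m) :
    pd i φ q = φ' (Pi.single i 1) := by
  have h0 : HasFDerivAt φ φ' (Function.update q i (q i)) := by
    rwa [Function.update_eq_self]
  have h2 := h0.comp_hasDerivAt (q i) (hasDerivAt_update q i (q i))
  exact h2.deriv

theorem ZPer.pd {m : ℕ} {φ : (Fin m → ℝ) → ℝ} (h : ZPer φ) (i : Fin m) : ZPer (pd i φ) := by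
  intro p z
  have hup : ∀ x : ℝ, Function.update (fun j => p j + (z j : ℝ)) i x =
      fun j => (Function.update p i (x - (z i : ℝ))) j + (z j : ℝ) := by
    intro x
    funext j
    by_cases hj : j = i
    · subst hj
      simp only [Function.update_self]
      ring
    · simp only [Function.update_of_ne hj]
  show deriv (fun x => φ (Function.update (fun j => p j + (z j : ℝ)) i x))
      (p i + (z i : ℝ)) = _
  have hfun : (fun x => φ (Function.update (fun j => p j + (z j : ℝ)) i x)) =
      fun x => (fun y => φ (Function.update p i y)) (x - (z i : ℝ)) := by
    funext x
    rw [hup x]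
    exact h (Function.update p i (x - (z i : ℝ))) z
  rw [hfun]
  have hshift := deriv_comp_sub_const (f := fun y => φ (Function.update p i y))
    (a := (z i : ℝ)) (x := p i + (z i : ℝ))
  rw [hshift, add_sub_cancel_right]
  rfl

theorem integral_cube_pd_eq_zero {n : ℕ} (i : Fin (n+1)) (g : (Fin (n+1) → ℝ) → ℝ)
    (g' : (Fin (n+1) → ℝ) → (Fin (n+1) → ℝ) →L[ℝ] ℝ)
    (hd : ∀ x, HasFDerivAt g (g' x) x)
    (hc : Continuous fun x => g' x (Pi.single i 1))
    (hper : ZPer g) :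
    ∫ x in cube (n+1), g' x (Pi.single i 1) = 0 := by
  have key := MeasureTheory.integral_divergence_of_hasFDerivAt_off_countable'
    (a := (0 : Fin (n+1) → ℝ)) (b := (1 : Fin (n+1) → ℝ))
    (by intro x; exact zero_le_one)
    (fun j => if j = i then g else 0)
    (fun j x => if j = i then g' x else 0)
    ∅ Set.countable_empty
    (fun j => by
      by_cases h : j = i
      · simp only [h, if_true]; exact (fun x _ => (hd x).continuousAt.continuousWithinAt)
      · simp [h]; exact continuousOn_const)
    (fun x _ j => by
      by_cases h : j = i
      · simpa [h] using hd x
      · simp only [h, if_false]; exact hasFDerivAt_const (0:ℝ) x)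
    (by
      have : (fun x => ∑ j, (if j = i then g' x else 0) (Pi.single j 1)) =
          fun x => g' x (Pi.single i 1) := by
        funext x
        rw [Finset.sum_eq_single i]
        · simp
        · intro j _ hj; simp [hj]
        · intro h; exact absurd (Finset.mem_univ i) h
      rw [this]
      exact hc.continuousOn.integrableOn_compact isCompact_Icc)
  have hsum : (fun x => ∑ j, (if j = i then g' x else 0) (Pi.single j 1)) =
      fun x => g' x (Pi.single i 1) := by
    funext x
    rw [Finset.sum_eq_single i]
    · simp
    · intro j _ hj; simp [hj]
    · intro h; exact absurd (Finset.mem_univ i) h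
  rw [hsum] at key
  have hfaces : ∀ j : Fin (n+1),
      ((∫ x in Set.Icc ((0 : Fin (n+1) → ℝ) ∘ j.succAbove) ((1 : Fin (n+1) → ℝ) ∘ j.succAbove),
        (if j = i then g else 0) (j.insertNth ((1 : Fin (n+1) → ℝ) j) x)) -
       ∫ x in Set.Icc ((0 : Fin (n+1) → ℝ) ∘ j.succAbove) ((1 : Fin (n+1) → ℝ) ∘ j.succAbove),
        (if j = i then g else 0) (j.insertNth ((0 : Fin (n+1) → ℝ) j) x)) = 0 := by
    intro j
    by_cases h : j = i
    · subst h
      have hEq : ∀ x : Fin n → ℝ, g (j.insertNth ((1 : Fin (n+1) → ℝ) j) x) =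
          g (j.insertNth ((0 : Fin (n+1) → ℝ) j) x) := by
        intro x
        have := hper (j.insertNth ((0 : Fin (n+1) → ℝ) j) x) (Pi.single j 1)
        rw [← this]
        congr 1
        funext k
        refine Fin.succAboveCases j ?_ ?_ k
        · rw [Fin.insertNth_apply_same, Fin.insertNth_apply_same, Pi.single_eq_same]
          norm_num
        · intro l
          simp [Fin.insertNth_apply_succAbove, Pi.single_eq_of_ne (Fin.succAbove_ne j l)]
      simp only [if_true, hEq, sub_self]
    · simp [h]
  rw [Finset.sum_congr rfl (fun j _ => hfaces j), Finset.sum_const_zero] at key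
  rw [MeasureTheory.setIntegral_congr_set cube_ae_Icc]
  exact key

theorem integral_cube_ibp {n : ℕ} (i : Fin (n+1)) (φ ψ : (Fin (n+1) → ℝ) → ℝ)
    (φ' ψ' : (Fin (n+1) → ℝ) → (Fin (n+1) → ℝ) →L[ℝ] ℝ)
    (hφ : ∀ x, HasFDerivAt φ (φ' x) x) (hψ : ∀ x, HasFDerivAt ψ (ψ' x) x)
    (hφc : Continuous fun x => φ' x (Pi.single i 1))
    (hψc : Continuous fun x => ψ' x (Pi.single i 1))
    (hpφ : ZPer φ) (hpψ : ZPer ψ) :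
    ∫ x in cube (n+1), (φ' x (Pi.single i 1) * ψ x + φ x * ψ' x (Pi.single i 1)) = 0 := by
  have hφcont : Continuous φ := by
    rw [continuous_iff_continuousAt]; exact fun x => (hφ x).continuousAt
  have hψcont : Continuous ψ := by
    rw [continuous_iff_continuousAt]; exact fun x => (hψ x).continuousAt
  have key := integral_cube_pd_eq_zero i (fun x => φ x * ψ x)
    (fun x => φ x • ψ' x + ψ x • φ' x)
    (fun x => (hφ x).mul (hψ x))
    (by
      simp only [ContinuousLinearMap.add_apply, ContinuousLinearMap.smul_apply,
        smul_eq_mul]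
      exact (hφcont.mul hψc).add (hψcont.mul hφc))
    (by intro p z; simp only []; rw [hpφ p z, hpψ p z])
  have heq : (fun x => (φ x • ψ' x + ψ x • φ' x) (Pi.single i 1)) =
      fun x => φ' x (Pi.single i 1) * ψ x + φ x * ψ' x (Pi.single i 1) := by
    funext x
    simp only [ContinuousLinearMap.add_apply, ContinuousLinearMap.smul_apply, smul_eq_mul]
    ring
  rw [show (∫ x in cube (n+1), (φ x • ψ' x + ψ x • φ' x) (Pi.single i 1)) =
      ∫ x in cube (n+1), (φ' x (Pi.single i 1) * ψ x + φ x * ψ' x (Pi.single i 1)) from by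
    rw [heq]] at key
  exact key

theorem hasDerivWithinAt_integral_cube {m : ℕ} {τ₀ : ℝ} (G H : ((Fin m → ℝ) × ℝ) → ℝ)
    (hGd : ∀ q ∈ Set.Icc (0 : Fin m → ℝ) 1, ∀ u ∈ Set.Ici τ₀,
      HasDerivWithinAt (fun s => G (q, s)) (H (q, u)) (Set.Ici τ₀) u)
    (hGi : ∀ s ∈ Set.Ici τ₀, IntegrableOn (fun q => G (q, s)) (cube m))
    (hHc : ContinuousOn H ((Set.Icc (0 : Fin m → ℝ) 1) ×ˢ Set.Ici τ₀))
    (hHi : ∀ s ∈ Set.Ici τ₀, IntegrableOn (fun q => H (q, s)) (cube m))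
    {τ : ℝ} (hτ : τ ∈ Set.Ici τ₀) :
    HasDerivWithinAt (fun s => ∫ q in cube m, G (q, s))
      (∫ q in cube m, H (q, τ)) (Set.Ici τ₀) τ := by
  rw [hasDerivWithinAt_iff_isLittleO]
  rw [Asymptotics.isLittleO_iff]
  intro c hc
  set K : Set ((Fin m → ℝ) × ℝ) := (Set.Icc (0 : Fin m → ℝ) 1) ×ˢ Set.Icc τ₀ (τ + 1) with hK
  have hKcompact : IsCompact K := isCompact_Icc.prod isCompact_Icc
  have hKsub : K ⊆ (Set.Icc (0 : Fin m → ℝ) 1) ×ˢ Set.Ici τ₀ :=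
    Set.prod_mono subset_rfl (fun u hu => hu.1)
  have hUC : UniformContinuousOn H K :=
    hKcompact.uniformContinuousOn_of_continuous (hHc.mono hKsub)
  rw [Metric.uniformContinuousOn_iff] at hUC
  obtain ⟨δ, hδpos, hδ⟩ := hUC c hc
  set δ' : ℝ := min δ 1 with hδ'
  have hδ'pos : 0 < δ' := lt_min hδpos one_pos
  have hmem : ∀ᶠ s in nhdsWithin τ (Set.Ici τ₀), s ∈ Set.Ici τ₀ := eventually_mem_nhdsWithin
  have hdist : ∀ᶠ s in nhdsWithin τ (Set.Ici τ₀), dist s τ < δ' :=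
    eventually_nhdsWithin_of_eventually_nhds (Metric.eventually_nhds_iff_ball.2
      ⟨δ', hδ'pos, fun y hy => by simpa [Metric.mem_ball] using hy⟩)
  filter_upwards [hmem, hdist] with s hs hsd
  have hkey : ∀ q ∈ cube m,
      ‖G (q, s) - G (q, τ) - (s - τ) • H (q, τ)‖ ≤ c * ‖s - τ‖ := by
    intro q hq
    have hqIcc : q ∈ Set.Icc (0 : Fin m → ℝ) 1 := cube_subset_Icc hq
    have hsub : Set.uIcc τ s ⊆ Set.Ici τ₀ := by
      intro u hu
      rw [Set.mem_uIcc] at hu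
      rcases hu with ⟨h1, _⟩ | ⟨h1, _⟩ <;> [exact le_trans hτ h1; exact le_trans hs h1]
    have hsubK : ∀ u ∈ Set.uIcc τ s, (q, u) ∈ K := by
      intro u hu
      refine ⟨hqIcc, hsub hu, ?_⟩
      rw [Set.mem_uIcc] at hu
      have hd1 : |s - τ| < δ' := by rwa [Real.dist_eq] at hsd
      cases' abs_lt.1 hd1 with hl hr
      rcases hu with ⟨h1, h2⟩ | ⟨h1, h2⟩ <;>
        linarith [min_le_right δ (1:ℝ)]
    have hbound : ∀ u ∈ Set.uIcc τ s, ‖H (q, u) - H (q, τ)‖ ≤ c := by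
      intro u hu
      have h1 : (q, u) ∈ K := hsubK u hu
      have h2 : (q, τ) ∈ K := hsubK τ Set.left_mem_uIcc
      have hdd : dist ((q, u) : (Fin m → ℝ) × ℝ) (q, τ) < δ := by
        rw [Prod.dist_eq]
        have : dist u τ < δ := by
          rw [Set.mem_uIcc] at hu
          have hd1 : |s - τ| < δ' := by rwa [Real.dist_eq] at hsd
          cases' abs_lt.1 hd1 with hl hr
          rw [Real.dist_eq, abs_lt]
          constructor <;> rcases hu with ⟨h1', h2'⟩ | ⟨h1', h2'⟩ <;>
            linarith [min_le_left δ (1:ℝ), min_le_right δ (1:ℝ)]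
        simp [this, hδpos]
      have := hδ _ h1 _ h2 hdd
      rw [Real.dist_eq] at this
      exact le_of_lt (by rwa [Real.norm_eq_abs])
    have hderiv : ∀ u ∈ Set.uIcc τ s,
        HasDerivWithinAt (fun r => G (q, r) - r • H (q, τ)) (H (q, u) - H (q, τ))
          (Set.uIcc τ s) u := by
      intro u hu
      exact ((hGd q hqIcc u (hsub hu)).mono hsub).sub
        ((hasDerivAt_id u).smul_const (H (q, τ))).hasDerivWithinAt |>.congr_deriv (by simp)
    have := Convex.norm_image_sub_le_of_norm_hasDerivWithin_le hderiv hbound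
      (convex_uIcc τ s) Set.left_mem_uIcc Set.right_mem_uIcc
    calc ‖G (q, s) - G (q, τ) - (s - τ) • H (q, τ)‖
        = ‖(G (q, s) - s • H (q, τ)) - (G (q, τ) - τ • H (q, τ))‖ := by
          congr 1; simp only [smul_eq_mul]; ring
      _ ≤ c * ‖s - τ‖ := this
  have hint : (∫ q in cube m, G (q, s)) - (∫ q in cube m, G (q, τ)) -
      (s - τ) • ∫ q in cube m, H (q, τ) =
      ∫ q in cube m, (G (q, s) - G (q, τ) - (s - τ) • H (q, τ)) := by
    have h1 : IntegrableOn (fun q => G (q, s) - G (q, τ)) (cube m) volume := by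
      exact (hGi s hs).sub (hGi τ hτ)
    have h2 : IntegrableOn (fun q => (s - τ) • H (q, τ)) (cube m) volume := by
      exact (hHi τ hτ).smul (s - τ)
    rw [integral_sub h1 h2, integral_sub (hGi s hs) (hGi τ hτ), integral_smul]
  rw [Real.norm_eq_abs, ← Real.norm_eq_abs, hint]
  have hb := norm_setIntegral_le_of_norm_le_const (C := c * ‖s - τ‖)
    (by rw [volume_cube]; exact ENNReal.one_lt_top) hkey
  · calc ‖∫ q in cube m, (G (q, s) - G (q, τ) - (s - τ) • H (q, τ))‖
        ≤ c * ‖s - τ‖ * (volume (cube m)).toReal := hb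
    _ = c * ‖s - τ‖ := by rw [volume_cube]; simp

set_option maxHeartbeats 1000000 in
theorem stmt_14 (m : ℕ) (hm : 1 ≤ m) (τ₀ : ℝ)
    (f v : (Fin m → ℝ) → ℝ → ℝ)
    (hfsmooth : ContDiffOn ℝ (⊤ : ℕ∞) (fun q : (Fin m → ℝ) × ℝ => f q.1 q.2)
      (Set.univ ×ˢ Set.Ici τ₀))
    (hfper : ∀ τ ∈ Set.Ici τ₀, ZPer (fun p => f p τ))
    (hfmono : ∀ p, ∀ τ ∈ Set.Ici τ₀,
      0 ≤ derivWithin (fun s => f p s) (Set.Ici τ₀) τ)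
    (hvsmooth : ContDiffOn ℝ (⊤ : ℕ∞) (fun q : (Fin m → ℝ) × ℝ => v q.1 q.2)
      (Set.univ ×ˢ Set.Ici τ₀))
    (hvper : ∀ τ ∈ Set.Ici τ₀, ZPer (fun p => v p τ))
    (hvpos : ∀ p, ∀ τ ∈ Set.Ici τ₀, 0 < v p τ)
    (hpde : ∀ p, ∀ τ ∈ Set.Ici τ₀,
      derivWithin (fun s => v p s) (Set.Ici τ₀) τ =
        (v p τ) ^ 2 * flatLap (fun q => v q τ) p + f p τ * (v p τ) ^ 3 - v p τ / 2)
    (J : ℝ → ℝ)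
    (hJ : ∀ τ, J τ = ∫ q in cube m,
      (gradSq (fun p => v p τ) q - f q τ * (v q τ) ^ 2 + Real.log (v q τ))) :
    ∀ τ ∈ Set.Ici τ₀,
      DifferentiableWithinAt ℝ J (Set.Ici τ₀) τ ∧
      derivWithin J (Set.Ici τ₀) τ ≤
        -2 * ∫ q in cube m,
          ((v q τ) ^ 2)⁻¹ * (derivWithin (fun s => v q s) (Set.Ici τ₀) τ) ^ 2 ∧
      (-2 * ∫ q in cube m,
          ((v q τ) ^ 2)⁻¹ * (derivWithin (fun s => v q s) (Set.Ici τ₀) τ) ^ 2) ≤ 0 := by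
  obtain ⟨n, rfl⟩ : ∃ n, m = n + 1 := ⟨m - 1, (Nat.succ_pred_eq_of_pos hm).symm⟩
  clear hm
  have hone : (1 : WithTop ℕ∞) ≤ ((⊤ : ℕ∞) : WithTop ℕ∞) := by
    exact_mod_cast (le_top : (1 : ℕ∞) ≤ ⊤)
  have hplus : ((⊤ : ℕ∞) : WithTop ℕ∞) + 1 ≤ ((⊤ : ℕ∞) : WithTop ℕ∞) :=
    le_of_eq ENat.coe_top_add_one
  have htwo : (2 : WithTop ℕ∞) ≤ ((⊤ : ℕ∞) : WithTop ℕ∞) :=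
    calc (2 : WithTop ℕ∞) = 1 + 1 := by norm_num
      _ ≤ ((⊤ : ℕ∞) : WithTop ℕ∞) + 1 := add_le_add_right hone 1
      _ = ((⊤ : ℕ∞) : WithTop ℕ∞) := ENat.coe_top_add_one
  intro τ hτ
  set S : Set ((Fin (n+1) → ℝ) × ℝ) := (Set.univ : Set (Fin (n+1) → ℝ)) ×ˢ Set.Ici τ₀ with hSdef
  have hS : UniqueDiffOn ℝ S := uniqueDiffOn_S τ₀
  have hmemS : ∀ (p : Fin (n+1) → ℝ) {u : ℝ}, u ∈ Set.Ici τ₀ → (p, u) ∈ S :=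
    fun p u hu => ⟨Set.mem_univ _, hu⟩
  -- smoothness bookkeeping
  have hvd : DifferentiableOn ℝ (fun q : (Fin (n+1) → ℝ) × ℝ => v q.1 q.2) S :=
    hvsmooth.differentiableOn (by simp)
  have hfd : DifferentiableOn ℝ (fun q : (Fin (n+1) → ℝ) × ℝ => f q.1 q.2) S :=
    hfsmooth.differentiableOn (by simp)
  set DV : ((Fin (n+1) → ℝ) × ℝ) → ((Fin (n+1) → ℝ) × ℝ) →L[ℝ] ℝ :=
    fderivWithin ℝ (fun q : (Fin (n+1) → ℝ) × ℝ => v q.1 q.2) S with hDVdef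
  have hDV : ContDiffOn ℝ (⊤ : ℕ∞) DV S := hvsmooth.fderivWithin hS hplus
  have hDVd : DifferentiableOn ℝ DV S := hDV.differentiableOn (by simp)
  set D2 : ((Fin (n+1) → ℝ) × ℝ) →
      ((Fin (n+1) → ℝ) × ℝ) →L[ℝ] ((Fin (n+1) → ℝ) × ℝ) →L[ℝ] ℝ :=
    fderivWithin ℝ DV S with hD2def
  have hD2 : ContDiffOn ℝ (⊤ : ℕ∞) D2 S := hDV.fderivWithin hS hplus
  set DF : ((Fin (n+1) → ℝ) × ℝ) → ((Fin (n+1) → ℝ) × ℝ) →L[ℝ] ℝ :=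
    fderivWithin ℝ (fun q : (Fin (n+1) → ℝ) × ℝ => f q.1 q.2) S with hDFdef
  have hDF : ContDiffOn ℝ (⊤ : ℕ∞) DF S := hfsmooth.fderivWithin hS hplus
  -- direction vectors
  set ei : Fin (n+1) → (Fin (n+1) → ℝ) × ℝ :=
    fun i => ((Pi.single i 1 : Fin (n+1) → ℝ), (0:ℝ)) with heidef
  set eτ : (Fin (n+1) → ℝ) × ℝ := ((0 : Fin (n+1) → ℝ), (1:ℝ)) with heτdef
  -- E1: spatial partials of v
  have hpd : ∀ (i : Fin (n+1)) (p : Fin (n+1) → ℝ) {u : ℝ}, u ∈ Set.Ici τ₀ →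
      pd i (fun q => v q u) p = DV (p, u) (ei i) := by
    intro i p u hu
    exact (hasDerivAt_coordPath hu (hvd _ (hmemS p hu)) i).deriv
  -- E2: time derivative of v
  have hBv : ∀ (p : Fin (n+1) → ℝ) {u : ℝ}, u ∈ Set.Ici τ₀ →
      HasDerivWithinAt (fun s => v p s) (DV (p, u) eτ) (Set.Ici τ₀) u := by
    intro p u hu
    exact hasDerivWithinAt_timePath (hvd _ (hmemS p hu))
  have hBv' : ∀ (p : Fin (n+1) → ℝ) {u : ℝ} (hu : u ∈ Set.Ici τ₀),
      derivWithin (fun s => v p s) (Set.Ici τ₀) u = DV (p, u) eτ := fun p u hu =>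
    (hBv p hu).derivWithin (uniqueDiffOn_Ici τ₀ u hu)
  have hFτ' : ∀ (p : Fin (n+1) → ℝ) {u : ℝ} (hu : u ∈ Set.Ici τ₀),
      derivWithin (fun s => f p s) (Set.Ici τ₀) u = DF (p, u) eτ := fun p u hu =>
    (hasDerivWithinAt_timePath (hfd _ (hmemS p hu))).derivWithin (uniqueDiffOn_Ici τ₀ u hu)
  -- symmetry of second derivatives
  have hsym : ∀ z ∈ S, ∀ w u', D2 z w u' = D2 z u' w := by
    intro z hz w u'
    have h := (hvsmooth z hz).isSymmSndFDerivWithinAt (by simpa using htwo) hS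
      (by rw [hSdef, closure_interior_S]; exact hz) hz
    exact h.eq w u'
  -- time derivative of the spatial partials
  have hAt : ∀ (i : Fin (n+1)) (q : Fin (n+1) → ℝ) {u : ℝ}, u ∈ Set.Ici τ₀ →
      HasDerivWithinAt (fun s => DV (q, s) (ei i)) (D2 (q, u) eτ (ei i)) (Set.Ici τ₀) u := by
    intro i q u hu
    have h1 := hasDerivWithinAt_timePath (hDVd _ (hmemS q hu))
    have h2 := h1.clm_apply (hasDerivWithinAt_const u (Set.Ici τ₀) (ei i))
    simpa using h2
  -- full spatial fderivs of the slices of DV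
  have hAslice : ∀ (w : (Fin (n+1) → ℝ) × ℝ) {u : ℝ}, u ∈ Set.Ici τ₀ → ∀ q,
      HasFDerivAt (fun x => DV (x, u) w)
        ((ContinuousLinearMap.apply ℝ ℝ w).comp
          ((D2 (q, u)).comp (ContinuousLinearMap.inl ℝ (Fin (n+1) → ℝ) ℝ))) q := by
    intro w u hu q
    have h1 := hasFDerivAt_slice hu (hDVd _ (hmemS q hu))
    exact (ContinuousLinearMap.apply ℝ ℝ w).hasFDerivAt.comp q h1
  -- continuity helpers
  have hslice_cont : ∀ (W : ((Fin (n+1) → ℝ) × ℝ) → ℝ), ContinuousOn W S →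
      ∀ {u : ℝ}, u ∈ Set.Ici τ₀ → Continuous (fun q : Fin (n+1) → ℝ => W (q, u)) := by
    intro W hW u hu
    rw [← continuousOn_univ]
    exact hW.comp ((continuous_id.prodMk continuous_const).continuousOn)
      (fun q _ => hmemS q hu)
  have hDVc : ∀ (w : (Fin (n+1) → ℝ) × ℝ), ContinuousOn (fun z => DV z w) S :=
    fun w => hDV.continuousOn.clm_apply continuousOn_const
  have hD2c : ∀ (w w' : (Fin (n+1) → ℝ) × ℝ), ContinuousOn (fun z => D2 z w w') S :=
    fun w w' => (hD2.continuousOn.clm_apply continuousOn_const).clm_apply continuousOn_const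
  have hDFc : ∀ (w : (Fin (n+1) → ℝ) × ℝ), ContinuousOn (fun z => DF z w) S :=
    fun w => hDF.continuousOn.clm_apply continuousOn_const
  have hvc : ContinuousOn (fun z : (Fin (n+1) → ℝ) × ℝ => v z.1 z.2) S := hvsmooth.continuousOn
  have hfc : ContinuousOn (fun z : (Fin (n+1) → ℝ) × ℝ => f z.1 z.2) S := hfsmooth.continuousOn
  -- the integrand and its time derivative
  set G : ((Fin (n+1) → ℝ) × ℝ) → ℝ := fun z =>
    gradSq (fun p => v p z.2) z.1 - f z.1 z.2 * (v z.1 z.2) ^ 2 + Real.log (v z.1 z.2)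
    with hGdef
  set H : ((Fin (n+1) → ℝ) × ℝ) → ℝ := fun z =>
    (∑ i, 2 * DV z (ei i) * D2 z eτ (ei i)) -
      (DF z eτ * (v z.1 z.2) ^ 2 + f z.1 z.2 * (2 * v z.1 z.2 * DV z eτ)) +
      DV z eτ / v z.1 z.2 with hHdef
  -- time differentiability of the integrand
  have hGd : ∀ q ∈ Set.Icc (0 : Fin (n+1) → ℝ) 1, ∀ u ∈ Set.Ici τ₀,
      HasDerivWithinAt (fun s => G (q, s)) (H (q, u)) (Set.Ici τ₀) u := by
    intro q _ u hu
    have hsum : HasDerivWithinAt (fun s => ∑ i, (DV (q, s) (ei i)) ^ 2)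
        (∑ i, 2 * DV (q, u) (ei i) * D2 (q, u) eτ (ei i)) (Set.Ici τ₀) u := by
      refine HasDerivWithinAt.fun_sum (fun i _ => ?_)
      have := (hAt i q hu).fun_pow 2
      convert this using 1
      · rfl
      push_cast
      ring
    have hfv : HasDerivWithinAt (fun s => f q s * (v q s) ^ 2)
        (DF (q, u) eτ * (v q u) ^ 2 + f q u * (2 * v q u * DV (q, u) eτ)) (Set.Ici τ₀) u := by
      have hfq : HasDerivWithinAt (fun s => f q s) (DF (q, u) eτ) (Set.Ici τ₀) u :=
        hasDerivWithinAt_timePath (hfd _ (hmemS q hu))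
      have hv2 := (hBv q hu).fun_pow 2
      have := hfq.fun_mul hv2
      convert this using 1
      · rfl
      · rfl
      push_cast
      ring
    have hlog : HasDerivWithinAt (fun s => Real.log (v q s))
        (DV (q, u) eτ / v q u) (Set.Ici τ₀) u :=
      (hBv q hu).log (ne_of_gt (hvpos q u hu))
    have h1 := (hsum.sub hfv).add hlog
    refine h1.congr (fun s hs => ?_) ?_
    · simp only [hGdef, gradSq]
      congr 1
      congr 1
      exact Finset.sum_congr rfl fun i _ => by rw [hpd i q hs]
    · simp only [hGdef, gradSq]
      congr 1
      congr 1
      exact Finset.sum_congr rfl fun i _ => by rw [hpd i q hu]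
  -- continuity of H on the compact slab
  have hHcS : ContinuousOn H S := by
    rw [hHdef]
    refine ContinuousOn.add (ContinuousOn.sub ?_ ?_) ?_
    · exact continuousOn_finset_sum _ fun i _ =>
        (continuousOn_const.mul (hDVc (ei i))).mul (hD2c eτ (ei i))
    · exact ((hDFc eτ).mul (hvc.pow 2)).add
        (hfc.mul ((continuousOn_const.mul hvc).mul (hDVc eτ)))
    · exact (hDVc eτ).div hvc (fun z hz => ne_of_gt (hvpos z.1 z.2 hz.2))
  -- continuity of slices of G
  have hGslice : ∀ {u : ℝ}, u ∈ Set.Ici τ₀ → Continuous (fun q => G (q, u)) := by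
    intro u hu
    have h1 : (fun q => G (q, u)) = fun q =>
        (∑ i, (DV (q, u) (ei i)) ^ 2) - f q u * (v q u) ^ 2 + Real.log (v q u) := by
      funext q
      simp only [hGdef, gradSq]
      congr 2
      exact Finset.sum_congr rfl fun i _ => by rw [hpd i q hu]
    rw [h1]
    have hvq : Continuous (fun q => v q u) :=
      hslice_cont _ hvc hu
    refine ((continuous_finset_sum _ fun i _ =>
        (hslice_cont _ (hDVc (ei i)) hu).pow 2).sub
        ((hslice_cont _ hfc hu).mul (hvq.pow 2))).add
      (hvq.log fun q => ne_of_gt (hvpos q u hu))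
  have hGi : ∀ s ∈ Set.Ici τ₀, IntegrableOn (fun q => G (q, s)) (cube (n+1)) volume :=
    fun s hs => integrableOn_cube (hGslice hs)
  have hHslice : ∀ {u : ℝ}, u ∈ Set.Ici τ₀ → Continuous (fun q => H (q, u)) :=
    fun {u} hu => hslice_cont _ hHcS hu
  have hHi : ∀ s ∈ Set.Ici τ₀, IntegrableOn (fun q => H (q, s)) (cube (n+1)) volume :=
    fun s hs => integrableOn_cube (hHslice hs)
  -- differentiate under the integral sign
  have hJfun : J = fun s => ∫ q in cube (n+1), G (q, s) := by
    funext s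
    rw [hJ s]
  have hJd : HasDerivWithinAt J (∫ q in cube (n+1), H (q, τ)) (Set.Ici τ₀) τ := by
    rw [hJfun]
    exact hasDerivWithinAt_integral_cube G H hGd hGi
      (hHcS.mono (Set.prod_mono (Set.subset_univ _) subset_rfl)) hHi hτ
  have hJdiff : DifferentiableWithinAt ℝ J (Set.Ici τ₀) τ := hJd.differentiableWithinAt
  have hJderiv : derivWithin J (Set.Ici τ₀) τ = ∫ q in cube (n+1), H (q, τ) :=
    hJd.derivWithin (uniqueDiffOn_Ici τ₀ τ hτ)
  -- integration by parts at time τ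
  have hibp : ∀ i : Fin (n+1),
      ∫ q in cube (n+1), (D2 (q, τ) (ei i) (ei i) * DV (q, τ) eτ +
        DV (q, τ) (ei i) * D2 (q, τ) (ei i) eτ) = 0 := by
    intro i
    have hφ := hAslice (ei i) hτ
    have hψ := hAslice eτ hτ
    have hZφ : ZPer (fun q => DV (q, τ) (ei i)) := by
      have h1 : (fun q => DV (q, τ) (ei i)) = pd i (fun p => v p τ) := by
        funext q
        rw [hpd i q hτ]
      rw [h1]
      exact (hvper τ hτ).pd i
    have hZψ : ZPer (fun q => DV (q, τ) eτ) := by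
      intro p z
      show DV ((fun j => p j + (z j : ℝ)), τ) eτ = DV (p, τ) eτ
      rw [← hBv' (fun j => p j + (z j : ℝ)) hτ, ← hBv' p hτ]
      exact derivWithin_congr (fun s hs => hvper s hs p z) (hvper τ hτ p z)
    have key := integral_cube_ibp i (fun q => DV (q, τ) (ei i)) (fun q => DV (q, τ) eτ)
      _ _ (hφ) (hψ)
      (by
        simp only [ContinuousLinearMap.comp_apply, ContinuousLinearMap.apply_apply,
          ContinuousLinearMap.inl_apply]
        exact hslice_cont _ (hD2c (ei i) (ei i)) hτ)
      (by
        simp only [ContinuousLinearMap.comp_apply, ContinuousLinearMap.apply_apply,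
          ContinuousLinearMap.inl_apply]
        exact hslice_cont _ (hD2c (ei i) eτ) hτ)
      hZφ hZψ
    have heq : ∀ q : Fin (n+1) → ℝ,
        ((ContinuousLinearMap.apply ℝ ℝ (ei i)).comp
          ((D2 (q, τ)).comp (ContinuousLinearMap.inl ℝ (Fin (n+1) → ℝ) ℝ))) (Pi.single i 1) *
          DV (q, τ) eτ +
        DV (q, τ) (ei i) *
        ((ContinuousLinearMap.apply ℝ ℝ eτ).comp
          ((D2 (q, τ)).comp (ContinuousLinearMap.inl ℝ (Fin (n+1) → ℝ) ℝ))) (Pi.single i 1) =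
        D2 (q, τ) (ei i) (ei i) * DV (q, τ) eτ + DV (q, τ) (ei i) * D2 (q, τ) (ei i) eτ := by
      intro q
      simp only [ContinuousLinearMap.comp_apply, ContinuousLinearMap.apply_apply,
        ContinuousLinearMap.inl_apply, heidef]
    rw [show (∫ q in cube (n+1),
        (((ContinuousLinearMap.apply ℝ ℝ (ei i)).comp
          ((D2 (q, τ)).comp (ContinuousLinearMap.inl ℝ (Fin (n+1) → ℝ) ℝ))) (Pi.single i 1) *
          DV (q, τ) eτ +
        DV (q, τ) (ei i) *
        ((ContinuousLinearMap.apply ℝ ℝ eτ).comp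
          ((D2 (q, τ)).comp (ContinuousLinearMap.inl ℝ (Fin (n+1) → ℝ) ℝ))) (Pi.single i 1))) =
        ∫ q in cube (n+1), (D2 (q, τ) (ei i) (ei i) * DV (q, τ) eτ +
          DV (q, τ) (ei i) * D2 (q, τ) (ei i) eτ) from by
      exact integral_congr_ae (Filter.Eventually.of_forall fun q => heq q)] at key
    exact key
  -- the summed IBP identity
  have hibp_sum : ∫ q in cube (n+1), (∑ i, 2 * (D2 (q, τ) (ei i) (ei i) * DV (q, τ) eτ +
      DV (q, τ) (ei i) * D2 (q, τ) (ei i) eτ)) = 0 := by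
    have hint : ∀ i : Fin (n+1), IntegrableOn (fun q => 2 * (D2 (q, τ) (ei i) (ei i) *
        DV (q, τ) eτ + DV (q, τ) (ei i) * D2 (q, τ) (ei i) eτ)) (cube (n+1)) volume := by
      intro i
      refine integrableOn_cube (Continuous.mul continuous_const ?_)
      exact ((hslice_cont _ (hD2c (ei i) (ei i)) hτ).mul
          (hslice_cont _ (hDVc eτ) hτ)).add
        ((hslice_cont _ (hDVc (ei i)) hτ).mul (hslice_cont _ (hD2c (ei i) eτ) hτ))
    rw [integral_finset_sum _ (fun i _ => hint i)]
    refine Finset.sum_eq_zero fun i _ => ?_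
    rw [integral_const_mul, hibp i, mul_zero]
  -- identify the Laplacian
  have hΔ : ∀ q : Fin (n+1) → ℝ, flatLap (fun p => v p τ) q = ∑ i, D2 (q, τ) (ei i) (ei i) := by
    intro q
    have h1 : ∀ i : Fin (n+1), pd i (fun p => v p τ) = fun x => DV (x, τ) (ei i) := by
      intro i
      funext x
      rw [hpd i x hτ]
    show (∑ i, pd i (pd i (fun p => v p τ)) q) = _
    refine Finset.sum_congr rfl fun i _ => ?_
    rw [h1 i, pd_of_hasFDerivAt (hAslice (ei i) hτ q) i]
    simp only [ContinuousLinearMap.comp_apply, ContinuousLinearMap.apply_apply,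
      ContinuousLinearMap.inl_apply, heidef]
  -- rewrite the derivative of J
  have hmain : derivWithin J (Set.Ici τ₀) τ =
      (-2) * (∫ q in cube (n+1), ((v q τ) ^ 2)⁻¹ * (DV (q, τ) eτ) ^ 2) -
      ∫ q in cube (n+1), DF (q, τ) eτ * (v q τ) ^ 2 := by
    rw [hJderiv]
    have hHint : IntegrableOn (fun q => H (q, τ)) (cube (n+1)) volume := hHi τ hτ
    have hSint : IntegrableOn (fun q => ∑ i, 2 * (D2 (q, τ) (ei i) (ei i) * DV (q, τ) eτ +
        DV (q, τ) (ei i) * D2 (q, τ) (ei i) eτ)) (cube (n+1)) volume := by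
      refine integrableOn_cube (continuous_finset_sum _ fun i _ => Continuous.mul
        continuous_const ?_)
      exact ((hslice_cont _ (hD2c (ei i) (ei i)) hτ).mul
          (hslice_cont _ (hDVc eτ) hτ)).add
        ((hslice_cont _ (hDVc (ei i)) hτ).mul (hslice_cont _ (hD2c (ei i) eτ) hτ))
    have h0 : ∫ q in cube (n+1), H (q, τ) =
        ∫ q in cube (n+1), (H (q, τ) - ∑ i, 2 * (D2 (q, τ) (ei i) (ei i) * DV (q, τ) eτ +
          DV (q, τ) (ei i) * D2 (q, τ) (ei i) eτ)) := by
      rw [integral_sub hHint hSint, hibp_sum, sub_zero]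
    rw [h0]
    have hpt : ∀ q : Fin (n+1) → ℝ,
        H (q, τ) - (∑ i, 2 * (D2 (q, τ) (ei i) (ei i) * DV (q, τ) eτ +
          DV (q, τ) (ei i) * D2 (q, τ) (ei i) eτ)) =
        (-2) * (((v q τ) ^ 2)⁻¹ * (DV (q, τ) eτ) ^ 2) - DF (q, τ) eτ * (v q τ) ^ 2 := by
      intro q
      have hBeq : DV (q, τ) eτ = (v q τ) ^ 2 * flatLap (fun p => v p τ) q +
          f q τ * (v q τ) ^ 3 - v q τ / 2 := by
        rw [← hBv' q hτ]
        exact hpde q τ hτ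
      have hsymq : ∀ i, D2 (q, τ) (ei i) eτ = D2 (q, τ) eτ (ei i) :=
        fun i => hsym (q, τ) (hmemS q hτ) (ei i) eτ
      have hvne : v q τ ≠ 0 := ne_of_gt (hvpos q τ hτ)
      have hsum2 : ∑ i, 2 * (D2 (q, τ) (ei i) (ei i) * DV (q, τ) eτ +
          DV (q, τ) (ei i) * D2 (q, τ) (ei i) eτ) =
          2 * (∑ i, D2 (q, τ) (ei i) (ei i)) * DV (q, τ) eτ +
          ∑ i, 2 * DV (q, τ) (ei i) * D2 (q, τ) eτ (ei i) := by
        have hterm : ∀ i : Fin (n+1), 2 * (D2 (q, τ) (ei i) (ei i) * DV (q, τ) eτ +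
            DV (q, τ) (ei i) * D2 (q, τ) (ei i) eτ) =
            2 * D2 (q, τ) (ei i) (ei i) * DV (q, τ) eτ +
            2 * DV (q, τ) (ei i) * D2 (q, τ) eτ (ei i) := by
          intro i
          rw [hsymq i]
          ring
        rw [Finset.sum_congr rfl (fun i _ => hterm i), Finset.sum_add_distrib]
        congr 1
        rw [Finset.mul_sum, Finset.sum_mul]
      simp only [hHdef]
      rw [hsum2, ← hΔ q, hBeq]
      have hv2 : v q τ ^ 2 ≠ 0 := pow_ne_zero 2 hvne
      field_simp
      ring
    rw [integral_congr_ae (Filter.Eventually.of_forall hpt)]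
    have hi1 : IntegrableOn (fun q => (-2) * (((v q τ) ^ 2)⁻¹ * (DV (q, τ) eτ) ^ 2))
        (cube (n+1)) volume := by
      refine integrableOn_cube (continuous_const.mul (Continuous.mul ?_ ?_))
      · exact (Continuous.pow (hslice_cont _ hvc hτ) 2).inv₀
          (fun q => pow_ne_zero 2 (ne_of_gt (hvpos q τ hτ)))
      · exact (hslice_cont _ (hDVc eτ) hτ).pow 2
    have hi2 : IntegrableOn (fun q => DF (q, τ) eτ * (v q τ) ^ 2) (cube (n+1)) volume := by
      refine integrableOn_cube ((hslice_cont _ (hDFc eτ) hτ).mul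
        ((hslice_cont _ hvc hτ).pow 2))
    rw [integral_sub hi1 hi2, integral_const_mul]
  -- final inequalities
  have htarget : (∫ q in cube (n+1),
      ((v q τ) ^ 2)⁻¹ * (derivWithin (fun s => v q s) (Set.Ici τ₀) τ) ^ 2) =
      ∫ q in cube (n+1), ((v q τ) ^ 2)⁻¹ * (DV (q, τ) eτ) ^ 2 := by
    refine integral_congr_ae (Filter.Eventually.of_forall fun q => ?_)
    simp only [hBv' q hτ]
  have hFnonneg : 0 ≤ ∫ q in cube (n+1), DF (q, τ) eτ * (v q τ) ^ 2 := by
    refine setIntegral_nonneg measurableSet_cube fun q _ => ?_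
    refine mul_nonneg ?_ (sq_nonneg _)
    rw [← hFτ' q hτ]
    exact hfmono q τ hτ
  have hTnonneg : 0 ≤ ∫ q in cube (n+1),
      ((v q τ) ^ 2)⁻¹ * (derivWithin (fun s => v q s) (Set.Ici τ₀) τ) ^ 2 := by
    refine setIntegral_nonneg measurableSet_cube fun q _ => ?_
    exact mul_nonneg (inv_nonneg.2 (sq_nonneg _)) (sq_nonneg _)
  refine ⟨hJdiff, ?_, by linarith⟩
  rw [hmain, ← htarget]
  linarith
end
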